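/- arXiv:1006.4657 — 2 statements merged into one kernel-verified Lean document; each statement's English description precedes it below -/
import Mathlib

section
/- Consider the underdamped harmonic oscillator with frequency ω > 0 and damping ratio 0 ≤ ζ < 1. Define B11(s) = e^{-ωζs}(cos(ω√(1-ζ²)s) + (ζ/√(1-ζ²)) sin(ω√(1-ζ²)s)) for ζ > 0 and B11(s) = cos(ωs) for ζ = 0. Then |B11(s)| ≤ 1 for all s ≥ 0. -/
/-- Underdamped oscillator entry `B₁₁(s)` is bounded by 1 for `s ≥ 0`. -/
theorem stmt_4 (ω ζ s : ℝ) (hω : 0 < ω) (hζ0 : 0 ≤ ζ) (hζ1 : ζ < 1) (hs : 0 ≤ s) :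
    |Real.exp (-(ω * ζ * s)) *
      (Real.cos (ω * Real.sqrt (1 - ζ ^ 2) * s) +
        (ζ / Real.sqrt (1 - ζ ^ 2)) * Real.sin (ω * Real.sqrt (1 - ζ ^ 2) * s))| ≤ 1 := by
  have hd : (0:ℝ) < 1 - ζ ^ 2 := by nlinarith
  have hsq : 0 < Real.sqrt (1 - ζ ^ 2) := Real.sqrt_pos.mpr hd
  set θ := ω * Real.sqrt (1 - ζ ^ 2) * s with hθ
  have hθ0 : 0 ≤ θ := by positivity
  have hk : 0 ≤ ζ / Real.sqrt (1 - ζ ^ 2) := by positivity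
  have hkθ : ζ / Real.sqrt (1 - ζ ^ 2) * θ = ω * ζ * s := by
    field_simp [hθ]; ring
  have habs : |Real.cos θ + ζ / Real.sqrt (1 - ζ ^ 2) * Real.sin θ|
      ≤ 1 + ω * ζ * s := by
    calc |Real.cos θ + ζ / Real.sqrt (1 - ζ ^ 2) * Real.sin θ|
        ≤ |Real.cos θ| + |ζ / Real.sqrt (1 - ζ ^ 2) * Real.sin θ| := abs_add_le _ _
      _ ≤ 1 + ω * ζ * s := by
          have h1 : |Real.cos θ| ≤ 1 := Real.abs_cos_le_one θ
          have h2 : |ζ / Real.sqrt (1 - ζ ^ 2) * Real.sin θ|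
              ≤ ζ / Real.sqrt (1 - ζ ^ 2) * θ := by
            rw [abs_mul, abs_of_nonneg hk]
            have hsin : |Real.sin θ| ≤ θ := by
              have := Real.abs_sin_le_abs (x := θ)
              rwa [abs_of_nonneg hθ0] at this
            exact mul_le_mul_of_nonneg_left hsin hk
          linarith [hkθ ▸ h2]
  rw [abs_mul, abs_of_pos (Real.exp_pos _)]
  have hle : Real.exp (-(ω * ζ * s)) * (1 + ω * ζ * s)
      ≤ Real.exp (-(ω * ζ * s)) * Real.exp (ω * ζ * s) := by
    have : 1 + ω * ζ * s ≤ Real.exp (ω * ζ * s) := by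
      have := Real.add_one_le_exp (ω * ζ * s); linarith
    exact mul_le_mul_of_nonneg_left this (Real.exp_pos _).le
  calc Real.exp (-(ω * ζ * s)) * |_| ≤ Real.exp (-(ω * ζ * s)) * (1 + ω * ζ * s) :=
        mul_le_mul_of_nonneg_left habs (Real.exp_pos _).le
    _ ≤ Real.exp (-(ω * ζ * s)) * Real.exp (ω * ζ * s) := hle
    _ = 1 := by rw [← Real.exp_add]; simp
end

section
/- For the overdamped oscillator with ω > 0, ζ > 1 (A, B as above), the entry B22(s) = (ζ(A(s)−B(s)) + √(ζ²-1)(A(s)+B(s)))/(2√(ζ²-1)) satisfies |B22(s)| ≤ 1 and |B22(s) − 1| ≤ 2ζω s for all s ≥ 0. -/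
set_option maxHeartbeats 1600000 in
/-- Overdamped oscillator entry `B₂₂(s)` satisfies `|B₂₂(s)| ≤ 1` and
`|B₂₂(s) − 1| ≤ 2ζωs` for `s ≥ 0`. -/
theorem stmt_10 (ω ζ s : ℝ) (hω : 0 < ω) (hζ : 1 < ζ) (hs : 0 ≤ s) :
    |(ζ * (Real.exp (ω * s * (-ζ - Real.sqrt (ζ ^ 2 - 1))) -
            Real.exp (ω * s * (-ζ + Real.sqrt (ζ ^ 2 - 1)))) +
        Real.sqrt (ζ ^ 2 - 1) *
          (Real.exp (ω * s * (-ζ - Real.sqrt (ζ ^ 2 - 1))) +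
            Real.exp (ω * s * (-ζ + Real.sqrt (ζ ^ 2 - 1))))) /
        (2 * Real.sqrt (ζ ^ 2 - 1))| ≤ 1 ∧
    |(ζ * (Real.exp (ω * s * (-ζ - Real.sqrt (ζ ^ 2 - 1))) -
            Real.exp (ω * s * (-ζ + Real.sqrt (ζ ^ 2 - 1)))) +
        Real.sqrt (ζ ^ 2 - 1) *
          (Real.exp (ω * s * (-ζ - Real.sqrt (ζ ^ 2 - 1))) +
            Real.exp (ω * s * (-ζ + Real.sqrt (ζ ^ 2 - 1))))) /
        (2 * Real.sqrt (ζ ^ 2 - 1)) - 1| ≤ 2 * ζ * ω * s := by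
  set r := Real.sqrt (ζ ^ 2 - 1) with hr_def
  have h1 : (0:ℝ) < ζ ^ 2 - 1 := by nlinarith
  have hr0 : 0 < r := Real.sqrt_pos.mpr h1
  have hr2 : r ^ 2 = ζ ^ 2 - 1 := Real.sq_sqrt h1.le
  have hrζ : r < ζ := by nlinarith
  have hx : 0 ≤ ω * s := mul_nonneg hω.le hs
  set q := Real.exp (ω * s * (-ζ - r)) with hq_def
  set p := Real.exp (ω * s * (-ζ + r)) with hp_def
  have hq0 : 0 < q := Real.exp_pos _
  have hp0 : 0 < p := Real.exp_pos _
  have hqp : q ≤ p := Real.exp_le_exp.mpr (by nlinarith)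
  have hp1 : p ≤ 1 := Real.exp_le_one_iff.mpr (by nlinarith)
  -- p - q ≤ 2 r (ωs) p
  have hqpe : q = p * Real.exp (-(2 * r * (ω * s))) := by
    rw [hp_def, hq_def, ← Real.exp_add]; congr 1; ring
  have key1 : p - q ≤ 2 * r * (ω * s) * p := by
    have h2 : 1 - Real.exp (-(2 * r * (ω * s))) ≤ 2 * r * (ω * s) := by
      have := Real.add_one_le_exp (-(2 * r * (ω * s))); linarith
    have h3 : p * (1 - Real.exp (-(2 * r * (ω * s)))) ≤ p * (2 * r * (ω * s)) :=
      mul_le_mul_of_nonneg_left h2 hp0.le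
    nlinarith [h3, hqpe]
  -- (ζ - r)(ωs) p ≤ 1 - p
  have hpinv : Real.exp ((ζ - r) * (ω * s)) * p = 1 := by
    rw [hp_def, ← Real.exp_add]
    rw [show (ζ - r) * (ω * s) + ω * s * (-ζ + r) = 0 by ring, Real.exp_zero]
  have key2 : (ζ - r) * (ω * s) * p ≤ 1 - p := by
    have h2 := Real.add_one_le_exp ((ζ - r) * (ω * s))
    have h3 : ((ζ - r) * (ω * s) + 1) * p ≤ Real.exp ((ζ - r) * (ω * s)) * p :=
      mul_le_mul_of_nonneg_right h2 hp0.le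
    rw [hpinv] at h3; nlinarith
  -- 1 - p ≤ (ζ - r)(ωs)
  have key3 : 1 - p ≤ (ζ - r) * (ω * s) := by
    have h2 := Real.add_one_le_exp (ω * s * (-ζ + r))
    rw [← hp_def] at h2; nlinarith
  have key4 : 1 - q ≤ (ζ + r) * (ω * s) := by
    have h2 := Real.add_one_le_exp (ω * s * (-ζ - r))
    rw [← hq_def] at h2; nlinarith
  have h2r : (0:ℝ) < 2 * r := by linarith
  have habs2r : |2 * r| = 2 * r := abs_of_pos h2r
  have hprod : (ζ - r) * (p - q) ≤ (ζ - r) * (2 * r * (ω * s) * p) :=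
    mul_le_mul_of_nonneg_left key1 (by linarith)
  have hprod2 : 2 * r * ((ζ - r) * (ω * s) * p) ≤ 2 * r * (1 - p) :=
    mul_le_mul_of_nonneg_left key2 (by linarith)
  constructor
  · rw [abs_div, habs2r, div_le_one h2r, abs_le]
    constructor
    · nlinarith [hprod, hprod2]
    · nlinarith [mul_nonneg (sub_nonneg.mpr hqp) (by linarith : (0:ℝ) ≤ ζ)]
  · have hN : (ζ * (q - p) + r * (q + p)) / (2 * r) - 1 =
        (ζ * (q - p) + r * (q + p) - 2 * r) / (2 * r) := by
      field_simp
    rw [hN, abs_div, habs2r, div_le_iff₀ h2r, abs_le]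
    constructor
    · -- -(2ζωs · 2r) ≤ N - 2r : N - 2r ≥ -4rζωs
      have a1 : ζ * (p - q) ≤ ζ * (2 * r * (ω * s) * p) :=
        mul_le_mul_of_nonneg_left key1 (by linarith)
      have a2 : ζ * (2 * r * (ω * s) * p) ≤ 2 * r * (ω * s) * ζ := by
        nlinarith [mul_nonneg (mul_nonneg (mul_nonneg hr0.le hx) (by linarith : (0:ℝ) ≤ ζ))
          (by linarith : (0:ℝ) ≤ 1 - p)]
      have a3 : r * (1 - p) ≤ r * ((ζ - r) * (ω * s)) :=
        mul_le_mul_of_nonneg_left key3 hr0.le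
      have a4 : r * (1 - q) ≤ r * ((ζ + r) * (ω * s)) :=
        mul_le_mul_of_nonneg_left key4 hr0.le
      nlinarith [a1, a2, a3, a4]
    · -- N - 2r ≤ 0 ≤ 2ζωs·2r
      have b1 : ζ * (q - p) ≤ ζ * 0 :=
        mul_le_mul_of_nonneg_left (by linarith) (by linarith)
      have b2 : r * (q + p) ≤ r * 2 :=
        mul_le_mul_of_nonneg_left (by linarith) hr0.le
      have b3 : (0:ℝ) ≤ 2 * ζ * ω * s * (2 * r) := by positivity
      nlinarith [b1, b2, b3]
end
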